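/- Let α, β ∈ ℂ with |α|² − |β|² = 1 and let γ(z) = (αz + β)/(conj(β)·z + conj(α)). Then for all b, b′ ∈ ℂ with |b| = |b′| = 1 one has |γ(b) − γ(b′)|² · P(γ(0), γ(b)) · P(γ(0), γ(b′)) = |b − b′|². -/

import Mathlib

open Complex

/-- The Poisson kernel of the unit disc, `P(z,b) = (1 − |z|²)/|z − b|²`. -/
noncomputable def poissonKernelDisc (z b : ℂ) : ℝ :=
  (1 - ‖z‖ ^ 2) / ‖z - b‖ ^ 2

/-- For `γ ∈ SU(1,1)` acting by `γ(z) = (αz + β)/(conj β·z + conj α)`, and boundary points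
`b, b′`, one has `|γb − γb′|² · P(γ0, γb) · P(γ0, γb′) = |b − b′|²`. -/
theorem stmt5 (α β : ℂ) (h : ‖α‖ ^ 2 - ‖β‖ ^ 2 = 1)
    (b b' : ℂ) (hb : ‖b‖ = 1) (hb' : ‖b'‖ = 1) :
    ‖(α * b + β) / ((starRingEnd ℂ) β * b + (starRingEnd ℂ) α) -
          (α * b' + β) / ((starRingEnd ℂ) β * b' + (starRingEnd ℂ) α)‖ ^ 2 *
        poissonKernelDisc ((α * 0 + β) / ((starRingEnd ℂ) β * 0 + (starRingEnd ℂ) α))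
          ((α * b + β) / ((starRingEnd ℂ) β * b + (starRingEnd ℂ) α)) *
        poissonKernelDisc ((α * 0 + β) / ((starRingEnd ℂ) β * 0 + (starRingEnd ℂ) α))
          ((α * b' + β) / ((starRingEnd ℂ) β * b' + (starRingEnd ℂ) α)) =
      ‖b - b'‖ ^ 2 := by
  have hns : Complex.normSq α - Complex.normSq β = 1 := by
    rw [← Complex.sq_norm, ← Complex.sq_norm]; exact h
  have hC : α * (starRingEnd ℂ) α - β * (starRingEnd ℂ) β = 1 := by
    rw [Complex.mul_conj, Complex.mul_conj, ← Complex.ofReal_sub, hns, Complex.ofReal_one]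
  have hαpos : 0 < ‖α‖ := by nlinarith [norm_nonneg β, norm_nonneg α]
  have hα : α ≠ 0 := by
    intro h0; rw [h0] at hαpos; simp at hαpos
  have hcα : (starRingEnd ℂ) α ≠ 0 := by simpa using hα
  have key : ∀ c : ℂ, ‖c‖ = 1 → (starRingEnd ℂ) β * c + (starRingEnd ℂ) α ≠ 0 := by
    intro c hc h0
    have h1 : (starRingEnd ℂ) α = -((starRingEnd ℂ) β * c) := by linear_combination h0
    have h2 : ‖α‖ = ‖β‖ := by
      have := congrArg (‖·‖) h1
      simpa [hc] using this
    rw [h2] at h; simp at h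
  set d := (starRingEnd ℂ) β * b + (starRingEnd ℂ) α with hd_def
  set d' := (starRingEnd ℂ) β * b' + (starRingEnd ℂ) α with hd'_def
  have hd : d ≠ 0 := key b hb
  have hd' : d' ≠ 0 := key b' hb'
  -- γ0 = β / conj α
  have hγ0 : (α * 0 + β) / ((starRingEnd ℂ) β * 0 + (starRingEnd ℂ) α) = β / (starRingEnd ℂ) α := by
    simp
  -- difference formula
  have e2 : (α * b + β) / d - (α * b' + β) / d' = (b - b') / (d * d') := by
    rw [div_sub_div _ _ hd hd', div_eq_div_iff (mul_ne_zero hd hd') (mul_ne_zero hd hd')]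
    rw [hd_def, hd'_def]
    linear_combination (((starRingEnd ℂ) β * b + (starRingEnd ℂ) α) *
      ((starRingEnd ℂ) β * b' + (starRingEnd ℂ) α)) * (b - b') * hC
  -- Poisson kernel formula
  have hP : ∀ c : ℂ, ‖c‖ = 1 →
      poissonKernelDisc (β / (starRingEnd ℂ) α)
        ((α * c + β) / ((starRingEnd ℂ) β * c + (starRingEnd ℂ) α))
        = ‖(starRingEnd ℂ) β * c + (starRingEnd ℂ) α‖ ^ 2 := by
    intro c hc
    have hdc := key c hc
    have e1 : β / (starRingEnd ℂ) α - (α * c + β) / ((starRingEnd ℂ) β * c + (starRingEnd ℂ) α)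
        = -c / ((starRingEnd ℂ) α * ((starRingEnd ℂ) β * c + (starRingEnd ℂ) α)) := by
      rw [div_sub_div _ _ hcα hdc,
        div_eq_div_iff (mul_ne_zero hcα hdc) (mul_ne_zero hcα hdc)]
      linear_combination (-c) * ((starRingEnd ℂ) α * ((starRingEnd ℂ) β * c + (starRingEnd ℂ) α)) * hC
    unfold poissonKernelDisc
    rw [e1]
    simp only [norm_div, norm_mul, norm_neg, hc, Complex.norm_conj]
    have hdpos : 0 < ‖(starRingEnd ℂ) β * c + (starRingEnd ℂ) α‖ :=
      (norm_pos_iff.mpr hdc)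
    field_simp
    nlinarith [hdpos, hαpos]
  rw [hγ0, e2, hP b hb, hP b' hb', norm_div, norm_mul]
  have hdpos : 0 < ‖d‖ := norm_pos_iff.mpr hd
  have hd'pos : 0 < ‖d'‖ := norm_pos_iff.mpr hd'
  field_simp
  rw [hd_def, hd'_def]
  ring
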